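/- For every simple mixed graph G on n ≥ 1 vertices, min{δ₁(G), δ₂(G)} ≤ (1/2)·ξ₁(G) ≤ max{Δ₁(G), Δ₂(G)}, where δ₁(G) = min_v (d v + d⁺ v), δ₂(G) = min_v (d v + d⁻ v), Δ₁(G) = max_v (d v + d⁺ v), and Δ₂(G) = max_v (d v + d⁻ v). -/

import Mathlib

set_option linter.unusedSectionVars false

open Matrix Finset Polynomial

variable {V : Type*} [Fintype V] [DecidableEq V]

/-- Undirected adjacency matrix of the mixed graph with edge-multiplicity function `E`:
`(u,v)`-entry `E u v` for `u ≠ v`, and `(v,v)`-entry `2 * E v v`. -/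
def Au (E : V → V → ℕ) : Matrix V V ℝ :=
  Matrix.of fun u v => if u = v then ((2 * E v v : ℕ) : ℝ) else ((E u v : ℕ) : ℝ)

/-- Arc matrix of the mixed graph with arc-multiplicity function `A`. -/
def Bm (A : V → V → ℕ) : Matrix V V ℝ := Matrix.of fun u v => ((A u v : ℕ) : ℝ)

/-- Undirected degree `d v`. -/
def dU (E : V → V → ℕ) (v : V) : ℕ :=
  (∑ u ∈ Finset.univ.filter (fun u => u ≠ v), E v u) + 2 * E v v

/-- Out-degree `d⁺ v`. -/
def dOut (A : V → V → ℕ) (v : V) : ℕ := ∑ u, A v u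

/-- In-degree `d⁻ v`. -/
def dIn (A : V → V → ℕ) (v : V) : ℕ := ∑ u, A u v

/-- Integrated adjacency matrix `𝓘(G) = [[Aᵤ, B], [Bᵀ, Aᵤ]]`. -/
def intAdj (E A : V → V → ℕ) : Matrix (V ⊕ V) (V ⊕ V) ℝ :=
  Matrix.fromBlocks (Au E) (Bm A) (Bm A)ᵀ (Au E)

/-- Integrated degree matrix `𝓘ᴰ(G)`. -/
def intDeg (E A : V → V → ℕ) : Matrix (V ⊕ V) (V ⊕ V) ℝ :=
  Matrix.diagonal (Sum.elim (fun v => ((dU E v + dOut A v : ℕ) : ℝ))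
    (fun v => ((dU E v + dIn A v : ℕ) : ℝ)))

/-- Integrated Laplacian matrix `𝓘ᴸ(G) = 𝓘ᴰ(G) - 𝓘(G)`. -/
def intLap (E A : V → V → ℕ) : Matrix (V ⊕ V) (V ⊕ V) ℝ := intDeg E A - intAdj E A

/-- Integrated signless Laplacian matrix `𝓘Q(G) = 𝓘ᴰ(G) + 𝓘(G)`. -/
def intQ (E A : V → V → ℕ) : Matrix (V ⊕ V) (V ⊕ V) ℝ := intDeg E A + intAdj E A

/-- A mixed graph is simple: multiplicities at most 1, no loops, no directed loops. -/
def IsSimple (E A : V → V → ℕ) : Prop :=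
  (∀ u v, E u v ≤ 1) ∧ (∀ u v, A u v ≤ 1) ∧ (∀ v, E v v = 0) ∧ (∀ v, A v v = 0)

/-- Number of edges (excluding loops): `e(G) = (1/2)·Σ_{u ≠ v} E u v`. -/
noncomputable def numEdges (E : V → V → ℕ) : ℝ :=
  (∑ u, ∑ v ∈ Finset.univ.filter (fun v => v ≠ u), (E u v : ℝ)) / 2

/-- Number of loops: `l(G) = Σ_v E v v`. -/
noncomputable def numLoops (E : V → V → ℕ) : ℝ := ∑ v, (E v v : ℝ)

/-- Number of arcs (including directed loops): `a(G) = Σ_{u,v} A u v`. -/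
noncomputable def numArcs (A : V → V → ℕ) : ℝ := ∑ u, ∑ v, (A u v : ℝ)

lemma intAdj_isHermitian (E A : V → V → ℕ) (hE : ∀ u v, E u v = E v u) :
    (intAdj E A).IsHermitian := by
  have hAu : (Au E)ᵀ = Au E := by
    ext u v
    by_cases h : u = v
    · subst h; rfl
    · simp [Au, Matrix.transpose_apply, h, Ne.symm h, hE u v]
  show (intAdj E A)ᴴ = intAdj E A
  rw [Matrix.conjTranspose_eq_transpose_of_trivial]
  unfold intAdj
  rw [Matrix.fromBlocks_transpose, hAu, Matrix.transpose_transpose]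

lemma intLap_isHermitian (E A : V → V → ℕ) (hE : ∀ u v, E u v = E v u) :
    (intLap E A).IsHermitian :=
  (Matrix.isHermitian_diagonal _).sub (intAdj_isHermitian E A hE)

lemma intQ_isHermitian (E A : V → V → ℕ) (hE : ∀ u v, E u v = E v u) :
    (intQ E A).IsHermitian :=
  (Matrix.isHermitian_diagonal _).add (intAdj_isHermitian E A hE)

/-- The non-increasing rearrangement of a finite tuple of reals. -/
noncomputable def sortDesc {N : ℕ} (f : Fin N → ℝ) : Fin N → ℝ :=
  fun i => (f ∘ Tuple.sort f) i.rev

/-- The eigenvalues of the integrated Laplacian matrix `𝓘ᴸ(G)`, in non-increasing order: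
`nuT E A hE i` is `ν_{i+1}(G)` (0-indexed). -/
noncomputable def nuT {n : ℕ} (E A : Fin n → Fin n → ℕ) (hE : ∀ u v, E u v = E v u) :
    Fin (n + n) → ℝ :=
  sortDesc (fun i => (intLap_isHermitian E A hE).eigenvalues (finSumFinEquiv.symm i))

/-- The eigenvalues of the integrated signless Laplacian matrix `𝓘Q(G)`, in non-increasing
order: `xiT E A hE i` is `ξ_{i+1}(G)` (0-indexed). -/
noncomputable def xiT {n : ℕ} (E A : Fin n → Fin n → ℕ) (hE : ∀ u v, E u v = E v u) :
    Fin (n + n) → ℝ :=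
  sortDesc (fun i => (intQ_isHermitian E A hE).eigenvalues (finSumFinEquiv.symm i))

/-- The eigenvalues of the integrated adjacency matrix `𝓘(G)`, in non-increasing order:
`lamT E A hE i` is `λ_{i+1}(G)` (0-indexed). -/
noncomputable def lamT {n : ℕ} (E A : Fin n → Fin n → ℕ) (hE : ∀ u v, E u v = E v u) :
    Fin (n + n) → ℝ :=
  sortDesc (fun i => (intAdj_isHermitian E A hE).eigenvalues (finSumFinEquiv.symm i))

-- upper bound: each eigenvalue ≤ C if all row sums ≤ C, entries nonneg
lemma eig_le_of_rowsum_le {N : Type*} [Fintype N] [DecidableEq N]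
    (M : Matrix N N ℝ) (hM : M.IsHermitian) (hpos : ∀ i j, 0 ≤ M i j)
    (C : ℝ) (hC : ∀ i, ∑ j, M i j ≤ C) (k : N) : hM.eigenvalues k ≤ C := by
  set x : N → ℝ := ⇑(hM.eigenvectorBasis k) with hx
  have hev : M *ᵥ x = hM.eigenvalues k • x := hM.mulVec_eigenvectorBasis k
  have hxne : ∃ i, x i ≠ 0 := by
    by_contra h
    push_neg at h
    have : (hM.eigenvectorBasis k : EuclideanSpace ℝ N) = 0 := by
      ext i; exact h i
    exact absurd this (by simpa using hM.eigenvectorBasis.toBasis.ne_zero k)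
  obtain ⟨i0, hi0⟩ := hxne
  obtain ⟨i, -, hi⟩ := Finset.exists_max_image Finset.univ (fun i => |x i|) ⟨i0, Finset.mem_univ i0⟩
  have hipos : 0 < |x i| := lt_of_lt_of_le (abs_pos.mpr hi0) (hi i0 (Finset.mem_univ i0))
  -- replace x by y with y i = |x i|
  set y : N → ℝ := if 0 ≤ x i then x else -x with hy
  have hevy : M *ᵥ y = hM.eigenvalues k • y := by
    by_cases h : 0 ≤ x i <;> simp [hy, h, Matrix.mulVec_neg, hev]
  have hyi : y i = |x i| := by
    by_cases h : 0 ≤ x i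
    · simp [hy, h, abs_of_nonneg h]
    · push_neg at h; simp [hy, not_le.mpr h, abs_of_neg h]
  have hyle : ∀ j, y j ≤ y i := by
    intro j
    have : |y j| = |x j| := by by_cases h : 0 ≤ x i <;> simp [hy, h]
    calc y j ≤ |y j| := le_abs_self _
    _ = |x j| := this
    _ ≤ |x i| := hi j (Finset.mem_univ j)
    _ = y i := hyi.symm
  have key : hM.eigenvalues k * y i ≤ C * y i := by
    have h1 : hM.eigenvalues k * y i = ∑ j, M i j * y j := by
      have := congrFun hevy i
      simp [Matrix.mulVec, dotProduct, Pi.smul_apply] at this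
      linarith [this]
    rw [h1]
    calc ∑ j, M i j * y j ≤ ∑ j, M i j * y i := by
          apply Finset.sum_le_sum
          intro j _
          exact mul_le_mul_of_nonneg_left (hyle j) (hpos i j)
    _ = (∑ j, M i j) * y i := by rw [Finset.sum_mul]
    _ ≤ C * y i := by
          apply mul_le_mul_of_nonneg_right (hC i)
          rw [hyi]; exact le_of_lt hipos
  have : 0 < y i := by rw [hyi]; exact hipos
  exact le_of_mul_le_mul_right key this

lemma dot_sumv {N K : Type*} [Fintype N] [Fintype K] (w : N → ℝ) (g : K → N → ℝ) :
    dotProduct w (∑ k, g k) = ∑ k, dotProduct w (g k) := by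
  simp only [dotProduct, Finset.sum_apply, Finset.mul_sum]
  exact Finset.sum_comm

lemma mulVec_sumv {N K : Type*} [Fintype N] [Fintype K] (M : Matrix N N ℝ) (g : K → N → ℝ) :
    M *ᵥ (∑ k, g k) = ∑ k, M *ᵥ g k := by
  have h := map_sum M.mulVecLin g Finset.univ
  simp only [Matrix.mulVecLin_apply] at h
  exact h

-- lower bound: some eigenvalue ≥ c if all row sums ≥ c
lemma exists_le_eig_of_le_rowsum {N : Type*} [Fintype N] [DecidableEq N] [Nonempty N]
    (M : Matrix N N ℝ) (hM : M.IsHermitian)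
    (c : ℝ) (hc : ∀ i, c ≤ ∑ j, M i j) : ∃ k, c ≤ hM.eigenvalues k := by
  by_contra h
  push_neg at h
  set b := hM.eigenvectorBasis with hb
  set bf : N → N → ℝ := fun k => ⇑(hM.eigenvectorBasis k) with hbf
  set w : EuclideanSpace ℝ N := WithLp.toLp 2 (fun _ => (1 : ℝ)) with hw
  set cf : N → ℝ := fun k => b.repr w k with hcf
  have hrep : ∑ k, cf k • (b k : EuclideanSpace ℝ N) = w := b.sum_repr w
  have hrep' : (fun (_:N) => (1:ℝ)) = ∑ k, cf k • bf k := by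
    ext i
    have h3 := congrArg (fun v : EuclideanSpace ℝ N => v i) hrep
    simp only [Finset.sum_apply, PiLp.smul_apply, smul_eq_mul] at h3
    simpa [hw, hbf, hb, Finset.sum_apply] using h3.symm
  have hMw : M *ᵥ (fun (_:N) => (1:ℝ)) = ∑ k, (cf k * hM.eigenvalues k) • bf k := by
    rw [hrep', mulVec_sumv]
    apply Finset.sum_congr rfl
    intro k _
    rw [Matrix.mulVec_smul, hM.mulVec_eigenvectorBasis k]
    ext i
    simp [hbf]
    ring
  have hdot : ∀ k, dotProduct (fun (_:N) => (1:ℝ)) (bf k) = cf k := by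
    intro k
    have h4 : cf k = ∑ i, bf k i := by
      rw [hcf]
      simp only [b.repr_apply_apply, PiLp.inner_apply, RCLike.inner_apply]
      simp [hw, hbf, hb, mul_comm]
    rw [h4]
    simp [dotProduct]
  have hS : dotProduct (fun (_:N) => (1:ℝ)) (M *ᵥ (fun (_:N) => (1:ℝ)))
      = ∑ k, hM.eigenvalues k * (cf k)^2 := by
    rw [hMw, dot_sumv]
    apply Finset.sum_congr rfl
    intro k _
    rw [dotProduct_smul, smul_eq_mul, hdot k]
    ring
  have hN : dotProduct (fun (_:N) => (1:ℝ)) (fun (_:N) => (1:ℝ)) = ∑ k, (cf k)^2 := by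
    conv_lhs => rw [hrep']
    rw [dotProduct_comm, dot_sumv]
    apply Finset.sum_congr rfl
    intro k _
    rw [dotProduct_smul, smul_eq_mul, ← hrep', hdot k]
    ring
  have hcard : (0:ℝ) < dotProduct (fun (_:N) => (1:ℝ)) (fun (_:N) => (1:ℝ)) := by
    simp [dotProduct]
    exact_mod_cast Fintype.card_pos
  have hex : ∃ k, 0 < (cf k)^2 := by
    by_contra hno
    push_neg at hno
    have hz : ∀ k, (cf k)^2 = 0 := fun k => le_antisymm (hno k) (sq_nonneg _)
    rw [hN] at hcard
    simp [hz] at hcard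
  obtain ⟨k0, hk0⟩ := hex
  have hlt : ∑ k, hM.eigenvalues k * (cf k)^2 < ∑ k, c * (cf k)^2 := by
    apply Finset.sum_lt_sum
    · intro k _
      exact mul_le_mul_of_nonneg_right (le_of_lt (h k)) (sq_nonneg _)
    · exact ⟨k0, Finset.mem_univ k0, by nlinarith [h k0]⟩
  have hge : c * dotProduct (fun (_:N) => (1:ℝ)) (fun (_:N) => (1:ℝ))
      ≤ dotProduct (fun (_:N) => (1:ℝ)) (M *ᵥ (fun (_:N) => (1:ℝ))) := by
    have e1 : dotProduct (fun (_:N) => (1:ℝ)) (M *ᵥ (fun (_:N) => (1:ℝ)))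
        = ∑ i, ∑ j, M i j := by
      simp [dotProduct, Matrix.mulVec]
    have e2 : c * dotProduct (fun (_:N) => (1:ℝ)) (fun (_:N) => (1:ℝ)) = ∑ _i : N, c := by
      simp [dotProduct, mul_comm]
    rw [e1, e2]
    exact Finset.sum_le_sum fun i _ => hc i
  rw [hS] at hge
  rw [← Finset.mul_sum, ← hN] at hlt
  linarith

lemma sortDesc_zero {N : ℕ} (hN : 0 < N) (f : Fin N → ℝ) :
    (∀ i, f i ≤ sortDesc f ⟨0, hN⟩) ∧ ∃ i, sortDesc f ⟨0, hN⟩ = f i := by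
  constructor
  · intro i
    have h1 : f i = (f ∘ Tuple.sort f) ((Tuple.sort f)⁻¹ i) := by simp
    rw [h1]
    show (f ∘ Tuple.sort f) _ ≤ (f ∘ Tuple.sort f) _
    apply Tuple.monotone_sort
    have := ((Tuple.sort f)⁻¹ i).isLt
    simp only [Fin.le_def, Fin.rev]
    omega
  · exact ⟨Tuple.sort f (Fin.rev ⟨0, hN⟩), rfl⟩

lemma intQ_nonneg {n : ℕ} (E A : Fin n → Fin n → ℕ) (i j : Fin n ⊕ Fin n) :
    0 ≤ intQ E A i j := by
  unfold intQ intDeg intAdj Au Bm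
  rcases i with v | v <;> rcases j with u | u <;>
    simp [Matrix.diagonal, Matrix.add_apply, Matrix.of_apply] <;>
    split <;> positivity

lemma sum_Au_row {n : ℕ} (E : Fin n → Fin n → ℕ) (v : Fin n) :
    ∑ u, Au E v u = ((dU E v : ℕ) : ℝ) := by
  unfold Au dU
  push_cast
  rw [← Finset.sum_filter_add_sum_filter_not Finset.univ (fun u => u ≠ v)]
  congr 1
  · apply Finset.sum_congr rfl
    intro u hu
    simp only [Finset.mem_filter] at hu
    simp [Matrix.of_apply, (Ne.symm hu.2)]
  · rw [show Finset.univ.filter (fun u => ¬ u ≠ (v:Fin n)) = {v} by ext u; simp]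
    simp [Matrix.of_apply]

lemma sum_Bm_row {n : ℕ} (A : Fin n → Fin n → ℕ) (v : Fin n) :
    ∑ u, Bm A v u = ((dOut A v : ℕ) : ℝ) := by
  unfold Bm dOut
  push_cast
  rfl

lemma sum_Bm_col {n : ℕ} (A : Fin n → Fin n → ℕ) (v : Fin n) :
    ∑ u, Bm A u v = ((dIn A v : ℕ) : ℝ) := by
  unfold Bm dIn
  push_cast
  rfl

lemma rowsum_inl {n : ℕ} (E A : Fin n → Fin n → ℕ) (v : Fin n) :
    ∑ j : Fin n ⊕ Fin n, intQ E A (Sum.inl v) j = 2 * ((dU E v + dOut A v : ℕ) : ℝ) := by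
  rw [Fintype.sum_sum_type]
  unfold intQ intDeg intAdj
  simp only [Matrix.add_apply, Matrix.fromBlocks_apply₁₁, Matrix.fromBlocks_apply₁₂,
    Matrix.diagonal_apply, Finset.sum_add_distrib]
  have hd1 : ∑ u : Fin n, (if (Sum.inl v : Fin n ⊕ Fin n) = Sum.inl u then
      Sum.elim (fun v => ((dU E v + dOut A v : ℕ) : ℝ))
        (fun v => ((dU E v + dIn A v : ℕ) : ℝ)) (Sum.inl v) else 0)
      = ((dU E v + dOut A v : ℕ) : ℝ) := by
    simp [Sum.inl.injEq, Finset.sum_ite_eq]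
  have hd2 : ∑ u : Fin n, (if (Sum.inl v : Fin n ⊕ Fin n) = Sum.inr u then
      Sum.elim (fun v => ((dU E v + dOut A v : ℕ) : ℝ))
        (fun v => ((dU E v + dIn A v : ℕ) : ℝ)) (Sum.inl v) else 0) = 0 := by
    simp
  rw [hd1, hd2, sum_Au_row, sum_Bm_row]
  push_cast
  ring

lemma rowsum_inr {n : ℕ} (E A : Fin n → Fin n → ℕ) (v : Fin n) :
    ∑ j : Fin n ⊕ Fin n, intQ E A (Sum.inr v) j = 2 * ((dU E v + dIn A v : ℕ) : ℝ) := by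
  rw [Fintype.sum_sum_type]
  unfold intQ intDeg intAdj
  simp only [Matrix.add_apply, Matrix.fromBlocks_apply₂₁, Matrix.fromBlocks_apply₂₂,
    Matrix.diagonal_apply, Matrix.transpose_apply, Finset.sum_add_distrib]
  have hd1 : ∑ u : Fin n, (if (Sum.inr v : Fin n ⊕ Fin n) = Sum.inl u then
      Sum.elim (fun v => ((dU E v + dOut A v : ℕ) : ℝ))
        (fun v => ((dU E v + dIn A v : ℕ) : ℝ)) (Sum.inr v) else 0) = 0 := by
    simp
  have hd2 : ∑ u : Fin n, (if (Sum.inr v : Fin n ⊕ Fin n) = Sum.inr u then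
      Sum.elim (fun v => ((dU E v + dOut A v : ℕ) : ℝ))
        (fun v => ((dU E v + dIn A v : ℕ) : ℝ)) (Sum.inr v) else 0)
      = ((dU E v + dIn A v : ℕ) : ℝ) := by
    simp [Sum.inr.injEq, Finset.sum_ite_eq]
  rw [hd1, hd2, sum_Au_row, sum_Bm_col]
  push_cast
  ring


/-- for every simple mixed graph `G` on `n ≥ 1` vertices,
`min{δ₁(G), δ₂(G)} ≤ (1/2)·ξ₁(G) ≤ max{Δ₁(G), Δ₂(G)}`. -/
theorem stmt19 (n : ℕ) (hn : 0 < n) (E A : Fin n → Fin n → ℕ)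
    (hE : ∀ u v, E u v = E v u) (hS : IsSimple E A) :
    ((min (Finset.univ.inf' (Finset.univ_nonempty_iff.mpr ⟨⟨0, hn⟩⟩)
          (fun v => dU E v + dOut A v))
        (Finset.univ.inf' (Finset.univ_nonempty_iff.mpr ⟨⟨0, hn⟩⟩)
          (fun v => dU E v + dIn A v)) : ℕ) : ℝ) ≤ (1 / 2) * xiT E A hE ⟨0, by omega⟩ ∧
      (1 / 2) * xiT E A hE ⟨0, by omega⟩ ≤
        ((max (Finset.univ.sup (fun v => dU E v + dOut A v))
          (Finset.univ.sup (fun v => dU E v + dIn A v)) : ℕ) : ℝ) := by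
  classical
  haveI : Nonempty (Fin n ⊕ Fin n) := ⟨Sum.inl ⟨0, hn⟩⟩
  set δ : ℕ := min (Finset.univ.inf' (Finset.univ_nonempty_iff.mpr ⟨⟨0, hn⟩⟩)
          (fun v => dU E v + dOut A v))
        (Finset.univ.inf' (Finset.univ_nonempty_iff.mpr ⟨⟨0, hn⟩⟩)
          (fun v => dU E v + dIn A v)) with hδ
  set Δ : ℕ := max (Finset.univ.sup (fun v => dU E v + dOut A v))
          (Finset.univ.sup (fun v => dU E v + dIn A v)) with hΔ
  have hM := intQ_isHermitian E A hE
  have hN : 0 < n + n := by omega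
  set g : Fin (n + n) → ℝ := fun i => hM.eigenvalues (finSumFinEquiv.symm i) with hg
  have hxi : xiT E A hE ⟨0, by omega⟩ = sortDesc g ⟨0, hN⟩ := rfl
  obtain ⟨hle, hmem⟩ := sortDesc_zero hN g
  -- row sum bounds
  have hrow_le : ∀ i : Fin n ⊕ Fin n, ∑ j, intQ E A i j ≤ 2 * (Δ : ℝ) := by
    rintro (v | v)
    · rw [rowsum_inl]
      have : dU E v + dOut A v ≤ Δ := by
        rw [hΔ]
        have ha : dU E v + dOut A v ≤ Finset.univ.sup (fun v => dU E v + dOut A v) :=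
          Finset.le_sup (f := fun v => dU E v + dOut A v) (Finset.mem_univ v)
        exact le_trans ha (le_max_left _ _)
      have := (Nat.cast_le (α := ℝ)).mpr this
      linarith
    · rw [rowsum_inr]
      have : dU E v + dIn A v ≤ Δ := by
        rw [hΔ]
        have ha : dU E v + dIn A v ≤ Finset.univ.sup (fun v => dU E v + dIn A v) :=
          Finset.le_sup (f := fun v => dU E v + dIn A v) (Finset.mem_univ v)
        exact le_trans ha (le_max_right _ _)
      have := (Nat.cast_le (α := ℝ)).mpr this
      linarith
  have hrow_ge : ∀ i : Fin n ⊕ Fin n, 2 * (δ : ℝ) ≤ ∑ j, intQ E A i j := by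
    rintro (v | v)
    · rw [rowsum_inl]
      have : δ ≤ dU E v + dOut A v :=
        le_trans (min_le_left _ _) (Finset.inf'_le _ (Finset.mem_univ v))
      have := (Nat.cast_le (α := ℝ)).mpr this
      linarith
    · rw [rowsum_inr]
      have : δ ≤ dU E v + dIn A v :=
        le_trans (min_le_right _ _) (Finset.inf'_le _ (Finset.mem_univ v))
      have := (Nat.cast_le (α := ℝ)).mpr this
      linarith
  -- upper bound
  have hub : sortDesc g ⟨0, hN⟩ ≤ 2 * (Δ : ℝ) := by
    obtain ⟨i, hi⟩ := hmem
    rw [hi, hg]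
    exact eig_le_of_rowsum_le _ hM (intQ_nonneg E A) _ hrow_le _
  -- lower bound
  have hlb : 2 * (δ : ℝ) ≤ sortDesc g ⟨0, hN⟩ := by
    obtain ⟨k, hk⟩ := exists_le_eig_of_le_rowsum (intQ E A) hM (2 * (δ : ℝ)) hrow_ge
    refine le_trans hk ?_
    have : hM.eigenvalues k = g (finSumFinEquiv k) := by simp [hg]
    rw [this]
    exact hle _
  rw [hxi]
  constructor <;> [skip; skip] <;> linarith
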